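/- Let f : K → M and g : L → M be group homomorphisms with f(K) ⊆ g(L), P = K ×_M L the pullback, B = Ker(g) embedded in P via ι(l) = (1,l). Then the assignment h ↦ q_h, q_h(k,l) = l·h(k)⁻¹, is a bijection between the set of group homomorphisms h : K → L with g∘h = f and the set of maps q : P → B satisfying the descent 1-cocycle conditions (q(1)=1, q(ι(l)·p)=l·q(p), q(p·p')=q(p·ι(q(p')))). -/

import Mathlib

/-- The pullback (fiber product) `K ×_M L` of `f : K → M` and `g : L → M`,
as a subgroup of `K × L`. -/
def fiberProd {K L M : Type*} [Group K] [Group L] [Group M]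
    (f : K →* M) (g : L →* M) : Subgroup (K × L) where
  carrier := {p | f p.1 = g p.2}
  one_mem' := by simp
  mul_mem' := by
    intro a b ha hb
    simp only [Set.mem_setOf_eq, Prod.fst_mul, Prod.snd_mul, map_mul] at *
    rw [ha, hb]
  inv_mem' := by
    intro a ha
    simp only [Set.mem_setOf_eq, Prod.fst_inv, Prod.snd_inv, map_inv] at *
    rw [ha]

/-- The embedding of `Ker g` into the pullback `K ×_M L`, `l ↦ (1, l)`. -/
def kerIota {K L M : Type*} [Group K] [Group L] [Group M]
    (f : K →* M) (g : L →* M) (l : g.ker) : fiberProd f g :=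
  ⟨((1 : K), (l : L)), by
    simp [fiberProd, MonoidHom.mem_ker.mp l.2]⟩

namespace Stmt19Aux

variable {K L M : Type*} [Group K] [Group L] [Group M] {f : K →* M} {g : L →* M}

lemma fp_ext {p q : fiberProd f g} (h : (p : K × L) = q) : p = q := Subtype.ext h

lemma well_def (q : fiberProd f g → g.ker)
    (hq2 : ∀ (l : g.ker) (p : fiberProd f g), q (kerIota f g l * p) = l * q p)
    {k : K} {l1 l2 : L} (h1 : f k = g l1) (h2 : f k = g l2) :
    ((q ⟨(k, l1), h1⟩ : L))⁻¹ * l1 = ((q ⟨(k, l2), h2⟩ : L))⁻¹ * l2 := by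
  have hb : l2 * l1⁻¹ ∈ g.ker := by
    simp [MonoidHom.mem_ker, ← h1, ← h2]
  have key : (⟨(k, l2), h2⟩ : fiberProd f g)
      = kerIota f g ⟨l2 * l1⁻¹, hb⟩ * ⟨(k, l1), h1⟩ := by
    apply fp_ext; simp [kerIota]
  rw [key, hq2]
  push_cast
  group

/-- Forward map: `q_h(k,l) = l * (h k)⁻¹`. -/
def fwd (h : K →* L) (hh : ∀ k : K, g (h k) = f k) (p : fiberProd f g) : g.ker :=
  ⟨(p : K × L).2 * (h (p : K × L).1)⁻¹, by
    have hp : f (p : K × L).1 = g (p : K × L).2 := p.2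
    simp [MonoidHom.mem_ker, hh, ← hp]⟩

lemma fwd_one (h : K →* L) (hh : ∀ k : K, g (h k) = f k) : fwd h hh 1 = 1 := by
  apply Subtype.ext; simp [fwd]

lemma fwd_two (h : K →* L) (hh : ∀ k : K, g (h k) = f k)
    (l : g.ker) (p : fiberProd f g) :
    fwd h hh (kerIota f g l * p) = l * fwd h hh p := by
  apply Subtype.ext
  simp [fwd, kerIota, mul_assoc]

lemma fwd_three (h : K →* L) (hh : ∀ k : K, g (h k) = f k)
    (p p' : fiberProd f g) :
    fwd h hh (p * p') = fwd h hh (p * kerIota f g (fwd h hh p')) := by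
  apply Subtype.ext
  simp [fwd, kerIota, mul_assoc]

lemma exl (hrange : f.range ≤ g.range) (k : K) : ∃ l : L, g l = f k := hrange ⟨k, rfl⟩

/-- Backward map underlying function. -/
noncomputable def bwdFun (hrange : f.range ≤ g.range) (q : fiberProd f g → g.ker) (k : K) : L :=
  ((q ⟨(k, (exl hrange k).choose), (exl hrange k).choose_spec.symm⟩ : L))⁻¹ *
    (exl hrange k).choose

lemma bwdFun_eq (hrange : f.range ≤ g.range) (q : fiberProd f g → g.ker)
    (hq2 : ∀ (l : g.ker) (p : fiberProd f g), q (kerIota f g l * p) = l * q p)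
    {k : K} {l : L} (h1 : f k = g l) :
    bwdFun hrange q k = ((q ⟨(k, l), h1⟩ : L))⁻¹ * l :=
  well_def q hq2 _ h1

end Stmt19Aux

namespace Stmt19Aux
variable {K L M : Type*} [Group K] [Group L] [Group M] {f : K →* M} {g : L →* M}

lemma g_bwd (hrange : f.range ≤ g.range) (q : fiberProd f g → g.ker)
    (hq2 : ∀ (l : g.ker) (p : fiberProd f g), q (kerIota f g l * p) = l * q p)
    (k : K) : g (bwdFun hrange q k) = f k := by
  obtain ⟨l, hl⟩ := exl hrange k
  rw [bwdFun_eq hrange q hq2 hl.symm]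
  have h2 := (q ⟨(k, l), hl.symm⟩).2
  simp only [MonoidHom.mem_ker] at h2
  simp [h2, hl]

lemma bwd_mul (hrange : f.range ≤ g.range) (q : fiberProd f g → g.ker)
    (hq2 : ∀ (l : g.ker) (p : fiberProd f g), q (kerIota f g l * p) = l * q p)
    (hq3 : ∀ p p' : fiberProd f g, q (p * p') = q (p * kerIota f g (q p')))
    (k k' : K) :
    bwdFun hrange q (k * k') = bwdFun hrange q k * bwdFun hrange q k' := by
  obtain ⟨l, hl⟩ := exl hrange k
  obtain ⟨l', hl'⟩ := exl hrange k'
  have h1 : f k = g l := hl.symm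
  have h1' : f k' = g l' := hl'.symm
  have hmul : f (k * k') = g (l * l') := by simp [h1, h1']
  set p : fiberProd f g := ⟨(k, l), h1⟩ with hp
  set p' : fiberProd f g := ⟨(k', l'), h1'⟩ with hp'
  have hker := (q p').2
  simp only [MonoidHom.mem_ker] at hker
  have hpq : f k = g (l * (q p' : L)) := by simp [hker, h1]
  rw [bwdFun_eq hrange q hq2 hmul, bwdFun_eq hrange q hq2 hpq,
    bwdFun_eq hrange q hq2 h1']
  have hpp' : (⟨(k * k', l * l'), hmul⟩ : fiberProd f g) = p * p' := rfl
  have hpi : (⟨(k, l * (q p' : L)), hpq⟩ : fiberProd f g)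
      = p * kerIota f g (q p') := by
    apply fp_ext; simp [kerIota, hp]
  rw [hpp', hpi, ← hq3]
  rw [← hp']
  group

noncomputable def bwdHom (hrange : f.range ≤ g.range) (q : fiberProd f g → g.ker)
    (hq1 : q 1 = 1)
    (hq2 : ∀ (l : g.ker) (p : fiberProd f g), q (kerIota f g l * p) = l * q p)
    (hq3 : ∀ p p' : fiberProd f g, q (p * p') = q (p * kerIota f g (q p'))) :
    K →* L where
  toFun := bwdFun hrange q
  map_one' := by
    have h1 : f (1 : K) = g (1 : L) := by simp
    rw [bwdFun_eq hrange q hq2 h1]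
    have : (⟨((1 : K), (1 : L)), h1⟩ : fiberProd f g) = 1 := rfl
    rw [this, hq1]
    simp
  map_mul' := bwd_mul hrange q hq2 hq3

lemma left_rt (hrange : f.range ≤ g.range) (h : K →* L)
    (hh : ∀ k : K, g (h k) = f k) (k : K) :
    bwdFun hrange (fwd h hh) k = h k := by
  have h1 : f k = g (h k) := (hh k).symm
  rw [bwdFun_eq hrange _ (fwd_two h hh) h1]
  simp [fwd]

lemma right_rt (hrange : f.range ≤ g.range) (q : fiberProd f g → g.ker)
    (hq1 : q 1 = 1)
    (hq2 : ∀ (l : g.ker) (p : fiberProd f g), q (kerIota f g l * p) = l * q p)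
    (hq3 : ∀ p p' : fiberProd f g, q (p * p') = q (p * kerIota f g (q p')))
    (p : fiberProd f g) :
    fwd (bwdHom hrange q hq1 hq2 hq3) (g_bwd hrange q hq2) p = q p := by
  apply Subtype.ext
  show (p : K × L).2 * (bwdFun hrange q (p : K × L).1)⁻¹ = q p
  have h1 : f (p : K × L).1 = g (p : K × L).2 := p.2
  rw [bwdFun_eq hrange q hq2 h1]
  have : (⟨((p : K × L).1, (p : K × L).2), h1⟩ : fiberProd f g) = p := rfl
  rw [this]
  group

end Stmt19Aux

/-- if `f(K) ⊆ g(L)`, the assignment `h ↦ q_h`, with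
`q_h (k, l) = l * (h k)⁻¹`, is a bijection between homomorphisms `h : K → L` with
`g ∘ h = f` and descent 1-cocycles `q : K ×_M L → Ker g`. -/
theorem stmt19 {K L M : Type*} [Group K] [Group L] [Group M]
    (f : K →* M) (g : L →* M) (hrange : f.range ≤ g.range) :
    ∃ e : {h : K →* L // ∀ k : K, g (h k) = f k} ≃
          {q : fiberProd f g → g.ker //
            q 1 = 1 ∧
            (∀ (l : g.ker) (p : fiberProd f g), q (kerIota f g l * p) = l * q p) ∧
            (∀ p p' : fiberProd f g, q (p * p') = q (p * kerIota f g (q p')))},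
      ∀ (h : {h : K →* L // ∀ k : K, g (h k) = f k}) (p : fiberProd f g),
        ((e h).1 p : L) = (p : K × L).2 * (h.1 (p : K × L).1)⁻¹ := by
  classical
  refine ⟨⟨fun h => ⟨Stmt19Aux.fwd h.1 h.2,
      Stmt19Aux.fwd_one h.1 h.2, Stmt19Aux.fwd_two h.1 h.2, Stmt19Aux.fwd_three h.1 h.2⟩,
    fun q => ⟨Stmt19Aux.bwdHom hrange q.1 q.2.1 q.2.2.1 q.2.2.2,
      Stmt19Aux.g_bwd hrange q.1 q.2.2.1⟩, ?_, ?_⟩, ?_⟩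
  · intro h
    apply Subtype.ext
    ext k
    exact Stmt19Aux.left_rt hrange h.1 h.2 k
  · intro q
    apply Subtype.ext
    funext p
    exact Stmt19Aux.right_rt hrange q.1 q.2.1 q.2.2.1 q.2.2.2 p
  · intro h p
    rfl
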